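/- For every prime p with p ≡ 1 (mod 3) and for each k ∈ {2, 3}, there exist integers u and v with gcd(u, v) = 1 such that u² + 27v² = 4 · 3^k · p³. -/

import Mathlib

-- step 1: square root of -3 mod p
lemma aux_sqrt_neg3 (p : ℕ) (hp : p.Prime) (hmod : p % 3 = 1) :
    ∃ s : ZMod p, s ^ 2 = -3 := by
  haveI : Fact p.Prime := ⟨hp⟩
  have h3 : (3 : ℕ).Prime := by norm_num
  haveI : Fact (3 : ℕ).Prime := ⟨h3⟩
  have hdvd : 3 ∣ Fintype.card (ZMod p)ˣ := by
    rw [ZMod.card_units_eq_totient, Nat.totient_prime hp]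
    omega
  obtain ⟨ζ, hζ⟩ := exists_prime_orderOf_dvd_card (G := (ZMod p)ˣ) 3 hdvd
  have hζ3 : ζ ^ 3 = 1 := by rw [← hζ]; exact pow_orderOf_eq_one ζ
  have hζ1 : ζ ≠ 1 := by
    intro h; rw [h, orderOf_one] at hζ; norm_num at hζ
  set z : ZMod p := (ζ : ZMod p) with hz
  have hz3 : z ^ 3 = 1 := by
    rw [hz, ← Units.val_pow_eq_pow_val, hζ3, Units.val_one]
  have hz1 : z ≠ 1 := by
    intro h; apply hζ1; ext; exact h
  have hquad : z ^ 2 + z + 1 = 0 := by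
    have : (z - 1) * (z ^ 2 + z + 1) = 0 := by linear_combination hz3
    rcases mul_eq_zero.mp this with h | h
    · exact absurd (sub_eq_zero.mp h) hz1
    · exact h
  exact ⟨2 * z + 1, by linear_combination 4 * hquad⟩


lemma aux_rep (p : ℕ) (hp : p.Prime) (hmod : p % 3 = 1)
    (hs : ∃ s : ZMod p, s ^ 2 = -3) :
    ∃ a b : ℤ, (p : ℤ) = a ^ 2 + 3 * b ^ 2 := by
  haveI : Fact p.Prime := ⟨hp⟩
  obtain ⟨s, hs⟩ := hs
  set n := Nat.sqrt p with hn
  have hp7 : 7 ≤ p := by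
    have h2 := hp.two_le
    by_contra h
    push_neg at h
    interval_cases p <;> first | omega | norm_num at hp
  -- p is not a perfect square, so n^2 < p
  have hnsq : n ^ 2 < p := by
    rcases Nat.lt_or_ge (n ^ 2) p with h | h
    · exact h
    · exfalso
      have heq : n * n = p := le_antisymm (Nat.sqrt_le p) (by nlinarith [Nat.sqrt_le' p])
      rcases hp.eq_one_or_self_of_dvd n ⟨n, heq.symm⟩ with h1 | h1 <;> nlinarith
  -- pigeonhole
  have hcard : Fintype.card (ZMod p) < Fintype.card (Fin (n + 1) × Fin (n + 1)) := by
    rw [ZMod.card, Fintype.card_prod, Fintype.card_fin]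
    calc p < (n + 1) ^ 2 := Nat.lt_succ_sqrt' p
    _ = (n + 1) * (n + 1) := sq (n+1) ▸ by ring
  obtain ⟨x, y, hxy, hfeq⟩ := Fintype.exists_ne_map_eq_of_card_lt
    (fun z : Fin (n + 1) × Fin (n + 1) => ((z.1 : ℕ) : ZMod p) - s * ((z.2 : ℕ) : ZMod p)) hcard
  set A : ℤ := ((x.1 : ℕ) : ℤ) - ((y.1 : ℕ) : ℤ) with hA
  set B : ℤ := ((x.2 : ℕ) : ℤ) - ((y.2 : ℕ) : ℤ) with hB
  have hcast : (A : ZMod p) = s * (B : ZMod p) := by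
    simp only [hA, hB]
    push_cast
    simp only [sub_eq_iff_eq_add] at hfeq ⊢
    linear_combination hfeq
  have hAlt : A ^ 2 < (p : ℤ) := by
    have h1 : ((x.1 : ℕ) : ℤ) ≤ n := by exact_mod_cast Nat.lt_succ_iff.mp x.1.isLt
    have h2 : ((y.1 : ℕ) : ℤ) ≤ n := by exact_mod_cast Nat.lt_succ_iff.mp y.1.isLt
    have h3 : (0 : ℤ) ≤ ((x.1 : ℕ) : ℤ) := Int.natCast_nonneg _
    have h4 : (0 : ℤ) ≤ ((y.1 : ℕ) : ℤ) := Int.natCast_nonneg _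
    have h5 : (n : ℤ) ^ 2 < (p : ℤ) := by exact_mod_cast hnsq
    nlinarith
  have hBlt : B ^ 2 < (p : ℤ) := by
    have h1 : ((x.2 : ℕ) : ℤ) ≤ n := by exact_mod_cast Nat.lt_succ_iff.mp x.2.isLt
    have h2 : ((y.2 : ℕ) : ℤ) ≤ n := by exact_mod_cast Nat.lt_succ_iff.mp y.2.isLt
    have h3 : (0 : ℤ) ≤ ((x.2 : ℕ) : ℤ) := Int.natCast_nonneg _
    have h4 : (0 : ℤ) ≤ ((y.2 : ℕ) : ℤ) := Int.natCast_nonneg _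
    have h5 : (n : ℤ) ^ 2 < (p : ℤ) := by exact_mod_cast hnsq
    nlinarith
  have hne : A ≠ 0 ∨ B ≠ 0 := by
    by_contra h
    push_neg at h
    apply hxy
    have e1 : x.1 = y.1 := Fin.ext (by exact_mod_cast sub_eq_zero.mp h.1)
    have e2 : x.2 = y.2 := Fin.ext (by exact_mod_cast sub_eq_zero.mp h.2)
    exact Prod.ext e1 e2
  have hdvd : (p : ℤ) ∣ A ^ 2 + 3 * B ^ 2 := by
    rw [← ZMod.intCast_zmod_eq_zero_iff_dvd]
    push_cast
    rw [hcast]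
    linear_combination (B : ZMod p) ^ 2 * hs
  have hpos : 0 < A ^ 2 + 3 * B ^ 2 := by
    rcases hne with h | h
    · have := sq_pos_of_ne_zero h; nlinarith [sq_nonneg B]
    · have := sq_pos_of_ne_zero h; nlinarith [sq_nonneg A]
  obtain ⟨m, hm⟩ := hdvd
  have hppos : (0 : ℤ) < p := by exact_mod_cast hp.pos
  have hm1 : 1 ≤ m := by nlinarith
  have hm3 : m ≤ 3 := by nlinarith
  interval_cases m
  · exact ⟨A, B, by linarith [hm]⟩
  · -- A^2 + 3B^2 = 2p is impossible mod 4
    exfalso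
    have hkey : ∀ u v c : ZMod 4, (c = 1 ∨ c = 3) → u ^ 2 + 3 * v ^ 2 ≠ c * 2 := by decide
    have hpodd : p % 2 = 1 := Nat.odd_iff.mp (hp.odd_of_ne_two (by omega))
    have hp4 : ((p : ℕ) : ZMod 4) = 1 ∨ ((p : ℕ) : ZMod 4) = 3 := by
      have h4 : p % 4 = 1 ∨ p % 4 = 3 := by omega
      rcases h4 with h4 | h4
      · left; rw [← ZMod.natCast_mod p 4, h4]; rfl
      · right; rw [← ZMod.natCast_mod p 4, h4]; rfl
    apply hkey (A : ZMod 4) (B : ZMod 4) ((p : ℕ) : ZMod 4) hp4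
    have := congrArg (fun z : ℤ => (z : ZMod 4)) hm
    push_cast at this
    linear_combination this
  · -- A^2 + 3B^2 = 3p : then 3 ∣ A, divide out
    have h3A : (3 : ℤ) ∣ A := by
      have hpr : Prime (3 : ℤ) := Int.prime_three
      have : (3 : ℤ) ∣ A ^ 2 := ⟨(p : ℤ) - B ^ 2, by linarith⟩
      exact hpr.dvd_of_dvd_pow this
    obtain ⟨C, hC⟩ := h3A
    refine ⟨B, C, ?_⟩
    have h3 : 3 * (p : ℤ) = 3 * (B ^ 2 + 3 * C ^ 2) := by
      linear_combination (-1 : ℤ) * hm + (A + 3 * C) * hC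
    exact mul_left_cancel₀ (by norm_num) h3


/-- **Lemma.** For every prime `p ≡ 1 (mod 3)` and each `k ∈ {2, 3}`, there exist coprime
integers `u` and `v` such that `u² + 27v² = 4 · 3^k · p³`. -/
theorem exists_coprime_rep (p : ℕ) (hp : p.Prime) (hmod : p % 3 = 1)
    (k : ℕ) (hk : k = 2 ∨ k = 3) :
    ∃ u v : ℤ, Int.gcd u v = 1 ∧ u ^ 2 + 27 * v ^ 2 = 4 * 3 ^ k * (p : ℤ) ^ 3 := by
  obtain ⟨a, b, hp2⟩ := aux_rep p hp hmod (aux_sqrt_neg3 p hp hmod)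
  set t : ℤ := a ^ 3 - 9 * a ^ 2 * b - 9 * a * b ^ 2 + 9 * b ^ 3 with ht
  set y : ℤ := a ^ 3 + 3 * a ^ 2 * b - 9 * a * b ^ 2 - 3 * b ^ 3 with hy
  have hpodd : p % 2 = 1 := Nat.odd_iff.mp (hp.odd_of_ne_two (by omega))
  have h2t : ¬ (2 : ℤ) ∣ t := by
    intro h
    have key : ∀ u v : ZMod 2, u ^ 2 + 3 * v ^ 2 = 1 →
        u ^ 3 - 9 * u ^ 2 * v - 9 * u * v ^ 2 + 9 * v ^ 3 ≠ 0 := by decide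
    have hc1 : ((a : ZMod 2)) ^ 2 + 3 * (b : ZMod 2) ^ 2 = 1 := by
      have h1 := congrArg (fun z : ℤ => (z : ZMod 2)) hp2
      push_cast at h1
      rw [← ZMod.natCast_mod p 2, hpodd] at h1
      push_cast at h1
      linear_combination -h1
    have hc2 : ((a : ZMod 2)) ^ 3 - 9 * (a : ZMod 2) ^ 2 * (b : ZMod 2)
        - 9 * (a : ZMod 2) * (b : ZMod 2) ^ 2 + 9 * (b : ZMod 2) ^ 3 = 0 := by
      have h1 := (ZMod.intCast_zmod_eq_zero_iff_dvd t 2).mpr h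
      rw [ht] at h1
      push_cast at h1
      linear_combination h1
    exact key _ _ hc1 hc2
  have key3 : ∀ u v : ZMod 3, u ^ 2 + 3 * v ^ 2 = 1 →
      (u ^ 3 - 9 * u ^ 2 * v - 9 * u * v ^ 2 + 9 * v ^ 3 ≠ 0 ∧
       u ^ 3 + 3 * u ^ 2 * v - 9 * u * v ^ 2 - 3 * v ^ 3 ≠ 0) := by decide
  have hc31 : ((a : ZMod 3)) ^ 2 + 3 * (b : ZMod 3) ^ 2 = 1 := by
    have h1 := congrArg (fun z : ℤ => (z : ZMod 3)) hp2
    push_cast at h1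
    rw [← ZMod.natCast_mod p 3, hmod] at h1
    push_cast at h1
    linear_combination -h1
  have h3t : ¬ (3 : ℤ) ∣ t := by
    intro h
    apply (key3 _ _ hc31).1
    have h1 := (ZMod.intCast_zmod_eq_zero_iff_dvd t 3).mpr h
    rw [ht] at h1
    push_cast at h1
    linear_combination h1
  have h3y : ¬ (3 : ℤ) ∣ y := by
    intro h
    apply (key3 _ _ hc31).2
    have h1 := (ZMod.intCast_zmod_eq_zero_iff_dvd y 3).mpr h
    rw [hy] at h1
    push_cast at h1
    linear_combination h1
  have hqaqb : ∀ q : ℕ, q.Prime → (q : ℤ) ∣ a → (q : ℤ) ∣ b → False := by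
    intro q hq ha hb
    obtain ⟨a', rfl⟩ := ha
    obtain ⟨b', rfl⟩ := hb
    have hdd : ((q : ℤ)) ^ 2 ∣ (p : ℤ) := ⟨a' ^ 2 + 3 * b' ^ 2, by rw [hp2]; ring⟩
    have hq2p : q ^ 2 ∣ p := by exact_mod_cast hdd
    have h2le := hq.two_le
    rcases hp.eq_one_or_self_of_dvd _ hq2p with h | h
    · nlinarith
    · have hqp : q ∣ p := ⟨q, by rw [← h]; ring⟩
      rcases hp.eq_one_or_self_of_dvd q hqp with h1 | h1
      · omega
      · nlinarith [hp.two_le]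
  have hgcd : Int.gcd t y = 1 := by
    by_contra hne
    obtain ⟨q, hq, hqd⟩ := Nat.exists_prime_and_dvd hne
    have hqt : (q : ℤ) ∣ t := dvd_trans (Int.natCast_dvd_natCast.mpr hqd) (Int.gcd_dvd_left _ _)
    have hqy : (q : ℤ) ∣ y := dvd_trans (Int.natCast_dvd_natCast.mpr hqd) (Int.gcd_dvd_right _ _)
    have hqP : Prime (q : ℤ) := Nat.prime_iff_prime_int.mp hq
    have hq2 : q ≠ 2 := by
      rintro rfl
      exact h2t (by exact_mod_cast hqt)
    have hq3 : q ≠ 3 := by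
      rintro rfl
      exact h3t (by exact_mod_cast hqt)
    have hdiff : (q : ℤ) ∣ 12 * (b * ((a - b) * (a + b))) := by
      have he : y - t = 12 * (b * ((a - b) * (a + b))) := by rw [ht, hy]; ring
      rw [← he]
      exact dvd_sub hqy hqt
    have hq12 : ¬ (q : ℤ) ∣ 12 := by
      intro h
      have h' : q ∣ 12 := by exact_mod_cast h
      have hle : q ≤ 12 := Nat.le_of_dvd (by norm_num) h'
      have h2le := hq.two_le
      interval_cases q <;> first
        | exact hq2 rfl
        | exact hq3 rfl
        | (revert h'; decide)
        | (revert hq; decide)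
    have haq : (q : ℤ) ∣ a ∧ (q : ℤ) ∣ b := by
      rcases hqP.dvd_mul.mp hdiff with h12 | hrest
      · exact absurd h12 hq12
      rcases hqP.dvd_mul.mp hrest with hb | hrest2
      · have ha3 : (q : ℤ) ∣ a ^ 3 := by
          have he : a ^ 3 = t + b * (9 * a ^ 2 + 9 * a * b - 9 * b ^ 2) := by rw [ht]; ring
          exact he ▸ dvd_add hqt (hb.mul_right _)
        exact ⟨hqP.dvd_of_dvd_pow ha3, hb⟩
      · have h9 : (q : ℤ) ∣ t + 8 * a ^ 3 := by
          have he : t + 8 * a ^ 3 = ((a - b) * (a + b)) * (9 * (a - b)) := by rw [ht]; ring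
          exact he ▸ hrest2.mul_right _
        have h8 : (q : ℤ) ∣ 8 * a ^ 3 := by
          have he : 8 * a ^ 3 = (t + 8 * a ^ 3) - t := by ring
          rw [he]
          exact dvd_sub h9 hqt
        rcases hqP.dvd_mul.mp h8 with h8' | ha3
        · exfalso
          apply hq2
          have h' : q ∣ 8 := by exact_mod_cast h8'
          have : q ∣ 2 := hq.dvd_of_dvd_pow (n := 3) (by norm_num [pow_succ] at *; exact h')
          have := Nat.le_of_dvd (by norm_num) this
          have := hq.two_le
          omega
        · have ha := hqP.dvd_of_dvd_pow ha3
          refine ⟨ha, ?_⟩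
          rcases hqP.dvd_mul.mp hrest2 with h | h
          · have he : b = a - (a - b) := by ring
            exact he ▸ dvd_sub ha h
          · have he : b = (a + b) - a := by ring
            exact he ▸ dvd_sub h ha
    exact hqaqb q hq haq.1 haq.2
  have hco : IsCoprime t y := Int.isCoprime_iff_gcd_eq_one.mpr hgcd
  have h3P : Prime (3 : ℤ) := by norm_num
  have hc3y : IsCoprime (3 : ℤ) y := h3P.coprime_iff_not_dvd.mpr h3y
  have hc3t : IsCoprime (3 : ℤ) t := h3P.coprime_iff_not_dvd.mpr h3t
  rcases hk with rfl | rfl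
  · refine ⟨3 * t, y, ?_, ?_⟩
    · exact Int.isCoprime_iff_gcd_eq_one.mp (hc3y.mul_left hco)
    · rw [hp2, ht, hy]; ring
  · refine ⟨9 * y, t, ?_, ?_⟩
    · refine Int.isCoprime_iff_gcd_eq_one.mp ?_
      have h1 : IsCoprime ((3 : ℤ) * (3 * y)) t := hc3t.mul_left (hc3t.mul_left hco.symm)
      have he : (9 : ℤ) * y = 3 * (3 * y) := by ring
      rwa [he]
    · rw [hp2, ht, hy]; ring
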